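/- Let X = (X_t)_{t≤T} be a nonnegative càdlàg submartingale with deterministic initial value X_0 = X₀ > 0 a.s. and E[X_T log X_T] < ∞. Then there is a unique α̂ ∈ (0,1] satisfying α̂·(1 + E[(X_T/X₀)·log(X_T/X₀)]) = E[X_T/X₀]·(1 + α̂·log α̂), and E[X̄_T] ≤ E[X_T]/α̂ = ( E[X_T log X_T] + X₀ − E[X_T]·log X₀ ) / (1 + α̂·log α̂). -/

import Mathlib

open MeasureTheory ProbabilityTheory Set Filter
open scoped ENNReal NNReal Classical Topology

noncomputable section

/-- Running maximum of a path over the time interval `[0, t]`. -/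
def runMax (f : ℝ → ℝ) (t : ℝ) : ℝ := sSup (f '' Set.Icc 0 t)

/-- A real function is càdlàg: right-continuous with left limits. -/
def IsCadlag (f : ℝ → ℝ) : Prop :=
  (∀ t, ContinuousWithinAt f (Set.Ici t) t) ∧
  (∀ t, ∃ l : ℝ, Filter.Tendsto f (nhdsWithin t (Set.Iio t)) (nhds l))

/-- `1 + α log α ≥ α > 0` on `(0,1]` (indeed for all `α > 0`). -/
lemma aux_one_add_mul_log_pos {α : ℝ} (h : 0 < α) : 0 < 1 + α * Real.log α := by
  have h1 : Real.log α⁻¹ ≤ α⁻¹ - 1 := Real.log_le_sub_one_of_pos (by positivity)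
  rw [Real.log_inv] at h1
  have h2 : α * (-Real.log α) ≤ α * (α⁻¹ - 1) := mul_le_mul_of_nonneg_left h1 h.le
  have h3 : α * α⁻¹ = 1 := mul_inv_cancel₀ h.ne'
  nlinarith

/-- `y log y ≥ y - 1` for `y ≥ 0` (with the convention `0 log 0 = 0`). -/
lemma aux_mul_log_ge {y : ℝ} (h : 0 ≤ y) : y - 1 ≤ y * Real.log y := by
  rcases h.eq_or_lt with h0 | h0
  · simp [← h0]
  · have h1 : Real.log y⁻¹ ≤ y⁻¹ - 1 := Real.log_le_sub_one_of_pos (by positivity)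
    rw [Real.log_inv] at h1
    have h2 : y * -Real.log y ≤ y * (y⁻¹ - 1) := mul_le_mul_of_nonneg_left h1 h0.le
    have h3 : y * y⁻¹ = 1 := mul_inv_cancel₀ h0.ne'
    nlinarith

/-- Young-type inequality `x log r ≤ x log x + r/β + x (log β - 1)`. -/
lemma aux_young {x r β : ℝ} (hx : 0 ≤ x) (hr : 0 < r) (hβ : 0 < β) :
    x * Real.log r ≤ x * Real.log x + r / β + x * (Real.log β - 1) := by
  rcases hx.eq_or_lt with h0 | h0
  · rw [← h0]
    simp only [zero_mul, zero_add, add_zero]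
    positivity
  · have key : Real.log (r / x) - Real.log β ≤ r / x / β - 1 := by
      have := Real.log_le_sub_one_of_pos (show 0 < r / x / β by positivity)
      rwa [Real.log_div (show (0:ℝ) < r/x by positivity).ne' hβ.ne'] at this
    rw [Real.log_div hr.ne' h0.ne'] at key
    have h2 : x * (Real.log r - Real.log x - Real.log β) ≤ x * (r / x / β - 1) :=
      mul_le_mul_of_nonneg_left key h0.le
    have h3 : x * (r / x / β) = r / β := by field_simp
    nlinarith

/-- Existence and uniqueness of the root `α̂`. -/
lemma aux_alpha_exists_unique {a b : ℝ} (ha : 1 ≤ a) (hb : a ≤ 1 + b) :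
    ∃! α : ℝ, α ∈ Set.Ioc (0:ℝ) 1 ∧ α * (1 + b) = a * (1 + α * Real.log α) := by
  set φ : ℝ → ℝ := fun α => α * (1 + b) - a * (1 + α * Real.log α) with hφ
  have hcont : Continuous φ := by
    apply Continuous.sub (by fun_prop)
    exact continuous_const.mul (continuous_const.add Real.continuous_mul_log)
  have hφ0 : φ 0 = -a := by simp [hφ]
  have hφ1 : φ 1 = 1 + b - a := by simp [hφ]
  have hmono : StrictMonoOn φ (Set.Icc 0 1) := by
    apply strictMonoOn_of_deriv_pos (convex_Icc 0 1) hcont.continuousOn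
    intro x hx
    rw [interior_Icc] at hx
    have hd : HasDerivAt φ ((1 + b) - a * (Real.log x + 1)) x := by
      have h1 : HasDerivAt (fun α : ℝ => α * (1 + b)) (1 + b) x := by
        simpa using (hasDerivAt_id x).mul_const (1 + b)
      have h2 : HasDerivAt (fun α : ℝ => a * (1 + α * Real.log α)) (a * (Real.log x + 1)) x := by
        simpa using ((hasDerivAt_const x (1:ℝ)).add (Real.hasDerivAt_mul_log hx.1.ne')).const_mul a
      exact h1.sub h2
    rw [hd.deriv]
    have hlog : Real.log x < 0 := Real.log_neg hx.1 hx.2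
    nlinarith
  have hIVT : ∃ α ∈ Set.Icc (0:ℝ) 1, φ α = 0 := by
    have h0 : (0:ℝ) ∈ Set.Icc (φ 0) (φ 1) := by
      rw [hφ0, hφ1]; constructor <;> linarith
    obtain ⟨α, hα, hval⟩ := intermediate_value_Icc zero_le_one hcont.continuousOn h0
    exact ⟨α, hα, hval⟩
  obtain ⟨α, hα, hval⟩ := hIVT
  have hαpos : 0 < α := by
    rcases hα.1.eq_or_lt with h | h
    · exfalso
      rw [← h] at hval
      linarith [hφ0, hval]
    · exact h
  have hvalα : α * (1 + b) - a * (1 + α * Real.log α) = 0 := hval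
  refine ⟨α, ⟨⟨hαpos, hα.2⟩, by linarith⟩, ?_⟩
  rintro α' ⟨hα', heq'⟩
  have hval' : φ α' = 0 := show α' * (1 + b) - a * (1 + α' * Real.log α') = 0 by linarith
  exact hmono.injOn ⟨hα'.1.le, hα'.2⟩ hα (by rw [hval', hval])

/-- For a right-continuous function, the running maximum is bounded by any bound that
holds at `T` and at rational times in `(0, T]`. -/
lemma aux_runMax_le {f : ℝ → ℝ} (hf : ∀ t, ContinuousWithinAt f (Set.Ici t) t)
    {T y : ℝ} (hT : 0 ≤ T) (hy : 0 ≤ y)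
    (hq : ∀ q : ℚ, (q : ℝ) ∈ Set.Ioc 0 T → f q ≤ y) (hfT : f T ≤ y) :
    runMax f T ≤ y := by
  apply Real.sSup_le _ hy
  rintro x ⟨t, ht, rfl⟩
  rcases ht.2.eq_or_lt with h | h
  · rw [h]; exact hfT
  -- t < T : approximate from the right by rationals
  set s : Set ℝ := {u : ℝ | t < u ∧ u < T ∧ ∃ q : ℚ, (q : ℝ) = u} with hs
  have hne : (nhdsWithin t s).NeBot := by
    rw [mem_closure_iff_nhdsWithin_neBot.symm, Metric.mem_closure_iff]
    intro ε hε
    obtain ⟨q, hq1, hq2⟩ := exists_rat_btwn (show t < min (t + ε) T by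
      simp [lt_min_iff]; exact ⟨by linarith, h⟩)
    rw [lt_min_iff] at hq2
    exact ⟨(q : ℝ), ⟨hq1, hq2.2, q, rfl⟩, by
      rw [Real.dist_eq, abs_lt]; constructor <;> [linarith [hq2.1]; linarith [hq2.1]]⟩
  have htend : Filter.Tendsto f (nhdsWithin t s) (nhds (f t)) := by
    apply (hf t).mono_left
    apply nhdsWithin_mono
    intro u hu
    exact le_of_lt hu.1
  refine le_of_tendsto htend ?_
  apply eventually_nhdsWithin_of_forall
  rintro u ⟨hu1, hu2, q, rfl⟩
  exact hq q ⟨lt_of_le_of_lt ht.1 hu1, hu2.le⟩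

/-- Doob's maximal inequality over an arbitrary finite set of times of a submartingale. -/
lemma aux_finset_maximal {Ω : Type} [m0 : MeasurableSpace Ω] {μ : Measure Ω}
    [IsProbabilityMeasure μ]
    {ℱ : Filtration ℝ m0} {X : ℝ → Ω → ℝ} (hX : Submartingale X ℱ μ)
    (hnonneg : ∀ s ω, 0 ≤ X s ω) {T : ℝ}
    (F : Finset ℝ) (hne : F.Nonempty) (hF : ∀ t ∈ F, t ≤ T) (hTF : T ∈ F)
    {ε : ℝ} (hε : 0 < ε) :
    ENNReal.ofReal ε * μ {ω | ε ≤ F.sup' hne fun t => X t ω} ≤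
      ENNReal.ofReal (∫ ω in {ω | ε ≤ F.sup' hne fun t => X t ω}, X T ω ∂μ) := by
  classical
  set τ : ℕ → ℝ := fun i => if h : i < F.card then (F.orderIsoOfFin rfl ⟨i, h⟩ : ℝ) else T with hτdef
  have hτF : ∀ i, τ i ∈ F := by
    intro i
    by_cases h : i < F.card
    · simp only [hτdef, dif_pos h]; exact (F.orderIsoOfFin rfl ⟨i, h⟩).2
    · simp only [hτdef, dif_neg h]; exact hTF
  have hτle : ∀ i, τ i ≤ T := fun i => hF _ (hτF i)
  have hτtop : τ F.card = T := by simp [hτdef]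
  have hτmono : Monotone τ := by
    intro i j hij
    by_cases hj : j < F.card
    · have hi : i < F.card := lt_of_le_of_lt hij hj
      simp only [hτdef, dif_pos hi, dif_pos hj]
      exact_mod_cast (F.orderIsoOfFin rfl).monotone (show (⟨i, hi⟩ : Fin F.card) ≤ ⟨j, hj⟩ from hij)
    · simp only [hτdef, dif_neg hj]
      by_cases hi : i < F.card
      · simp only [dif_pos hi]
        exact hF _ (by exact (F.orderIsoOfFin rfl ⟨i, hi⟩).2)
      · simp only [dif_neg hi]
        exact le_refl T
  set 𝒢 : Filtration ℕ m0 :=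
    ⟨fun i => ℱ (τ i), fun i j h => ℱ.mono (hτmono h), fun i => ℱ.le _⟩ with h𝒢
  have hsub : Submartingale (fun i => X (τ i)) 𝒢 μ :=
    ⟨fun i => hX.stronglyAdapted (τ i), fun i j h => hX.2.1 _ _ (hτmono h), fun i => hX.integrable _⟩
  have hYnn : (0 : ℕ → Ω → ℝ) ≤ fun i => X (τ i) := fun i ω => hnonneg _ _
  have key := maximal_ineq hsub hYnn (ε := ε.toNNReal) F.card
  have hcoe : ((ε.toNNReal : ℝ≥0) : ℝ) = ε := Real.coe_toNNReal ε hε.le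
  have hsupeq : ∀ ω : Ω,
      ((Finset.range (F.card + 1)).sup' Finset.nonempty_range_add_one fun k => X (τ k) ω)
        = F.sup' hne fun t => X t ω := by
    intro ω
    apply le_antisymm
    · apply Finset.sup'_le
      intro k _
      exact Finset.le_sup' (fun t => X t ω) (hτF k)
    · apply Finset.sup'_le
      intro t ht
      have : τ (((F.orderIsoOfFin rfl).symm ⟨t, ht⟩ : Fin F.card) : ℕ) = t := by
        have hlt : (((F.orderIsoOfFin rfl).symm ⟨t, ht⟩ : Fin F.card) : ℕ) < F.card :=
          ((F.orderIsoOfFin rfl).symm ⟨t, ht⟩).2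
        simp only [hτdef, dif_pos hlt]
        have := (F.orderIsoOfFin rfl).apply_symm_apply ⟨t, ht⟩
        rw [show (⟨(((F.orderIsoOfFin rfl).symm ⟨t, ht⟩ : Fin F.card) : ℕ), hlt⟩ : Fin F.card)
            = (F.orderIsoOfFin rfl).symm ⟨t, ht⟩ from Fin.ext rfl, this]
      calc X t ω = X (τ _) ω := by rw [this]
        _ ≤ _ := Finset.le_sup' (fun k => X (τ k) ω)
            (Finset.mem_range.mpr (Nat.lt_succ_of_lt ((F.orderIsoOfFin rfl).symm ⟨t, ht⟩).2))
  have hseteq : {ω : Ω | (↑ε.toNNReal : ℝ) ≤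
      (Finset.range (F.card + 1)).sup' Finset.nonempty_range_add_one fun k => X (τ k) ω}
      = {ω | ε ≤ F.sup' hne fun t => X t ω} := by
    ext ω; simp only [Set.mem_setOf_eq, hcoe, hsupeq ω]
  rw [hseteq, hτtop] at key
  have hsmul : ε.toNNReal • μ {ω | ε ≤ F.sup' hne fun t => X t ω}
      = ENNReal.ofReal ε * μ {ω | ε ≤ F.sup' hne fun t => X t ω} := by
    rw [ENNReal.smul_def, smul_eq_mul, ENNReal.ofReal]
  rw [← hsmul]
  exact key

lemma aux_lintegral_inv_Ioo {u r : ℝ} (hu : 0 < u) (hur : u ≤ r) :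
    ∫⁻ t in Set.Ioo u r, ENNReal.ofReal (1 / t) = ENNReal.ofReal (Real.log r - Real.log u) := by
  have hr : 0 < r := lt_of_lt_of_le hu hur
  have hcont : ContinuousOn (fun t : ℝ => 1 / t) (Set.Icc u r) := by
    apply ContinuousOn.div continuousOn_const continuousOn_id
    intro t ht
    exact (lt_of_lt_of_le hu ht.1).ne'
  have hint : IntegrableOn (fun t : ℝ => 1 / t) (Set.Ioo u r) volume :=
    (hcont.integrableOn_Icc).mono_set Set.Ioo_subset_Icc_self
  have hnn : 0 ≤ᵐ[volume.restrict (Set.Ioo u r)] fun t : ℝ => 1 / t := by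
    exact (ae_restrict_iff' measurableSet_Ioo).mpr (ae_of_all _ fun t ht => by
      have : 0 < t := lt_trans hu ht.1
      positivity)
  rw [← ofReal_integral_eq_lintegral_ofReal hint hnn]
  congr 1
  have h1 : ∫ t in Set.Ioo u r, (1 : ℝ) / t = ∫ t in Set.Ioc u r, (1 : ℝ) / t :=
    (MeasureTheory.integral_Ioc_eq_integral_Ioo).symm
  rw [h1, ← intervalIntegral.integral_of_le hur, integral_one_div, Real.log_div hr.ne' hu.ne']
  rw [Set.uIcc_of_le hur]
  intro h0
  exact absurd h0.1 (not_le.mpr hu)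

lemma aux_lintegral_inv {u r : ℝ} (hu : 0 < u) (hur : u ≤ r) {s : Set ℝ}
    (h1 : Set.Ico u r ⊆ s) (h2 : s ⊆ Set.Icc u r) :
    ∫⁻ t in s, ENNReal.ofReal (1 / t) = ENNReal.ofReal (Real.log r - Real.log u) := by
  apply le_antisymm
  · calc ∫⁻ t in s, ENNReal.ofReal (1 / t) ≤ ∫⁻ t in Set.Icc u r, ENNReal.ofReal (1 / t) :=
          lintegral_mono_set h2
      _ = ∫⁻ t in Set.Ioo u r, ENNReal.ofReal (1 / t) := by
          rw [Measure.restrict_congr_set Ioo_ae_eq_Icc.symm]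
      _ = _ := aux_lintegral_inv_Ioo hu hur
  · calc ENNReal.ofReal (Real.log r - Real.log u)
        = ∫⁻ t in Set.Ioo u r, ENNReal.ofReal (1 / t) := (aux_lintegral_inv_Ioo hu hur).symm
      _ = ∫⁻ t in Set.Ico u r, ENNReal.ofReal (1 / t) := by
          rw [Measure.restrict_congr_set Ioo_ae_eq_Ico]
      _ ≤ _ := lintegral_mono_set h1

/-- Core estimate: for every `β > 1`,
`E[X̄_T] ≤ (x₀ + E[X_T log X_T] + E[X_T](log β - 1 - log x₀)) β/(β-1)`. -/
lemma aux_doob_core {Ω : Type} [m0 : MeasurableSpace Ω] {μ : Measure Ω}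
    [IsProbabilityMeasure μ] {T x₀ : ℝ} (hT : 0 ≤ T) (hx₀ : 0 < x₀)
    {ℱ : Filtration ℝ m0} {X : ℝ → Ω → ℝ} (hX : Submartingale X ℱ μ)
    (hcadlag : ∀ ω, IsCadlag fun s => X s ω)
    (hnonneg : ∀ s ω, 0 ≤ X s ω)
    (hint : Integrable (fun ω => X T ω * Real.log (X T ω)) μ)
    {β : ℝ} (hβ : 1 < β) :
    (∫⁻ ω, ENNReal.ofReal (runMax (fun s => X s ω) T) ∂μ)
      ≤ ENNReal.ofReal (((x₀ + (∫ ω, X T ω * Real.log (X T ω) ∂μ)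
          + (∫ ω, X T ω ∂μ) * (Real.log β - 1 - Real.log x₀)) * (β / (β - 1)))) := by
  classical
  have hβ0 : 0 < β := lt_trans one_pos hβ
  have hXTint : Integrable (X T) μ := hX.integrable T
  have hXTmeas : Measurable (X T) := (hX.stronglyMeasurable T).measurable.le (ℱ.le T)
  -- enumeration of rational times together with T
  set e : ℕ → ℝ := fun n => if n = 0 then T else
    (if ((Denumerable.ofNat ℚ (n-1) : ℚ) : ℝ) ∈ Set.Icc 0 T
      then ((Denumerable.ofNat ℚ (n-1) : ℚ) : ℝ) else T) with he
  have he0 : e 0 = T := by simp only [he, if_pos rfl]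
  have heIcc : ∀ i, e i ∈ Set.Icc 0 T := by
    intro i
    simp only [he]
    split_ifs with h1 h2
    · exact ⟨hT, le_refl T⟩
    · exact h2
    · exact ⟨hT, le_refl T⟩
  have heQ : ∀ r : ℚ, (r : ℝ) ∈ Set.Icc 0 T → ∃ i, e i = (r : ℝ) := by
    intro r hr
    obtain ⟨n, hn⟩ : ∃ n : ℕ, (Denumerable.ofNat ℚ n : ℚ) = r := ⟨_, Denumerable.ofNat_encode r⟩
    refine ⟨n + 1, ?_⟩
    simp only [he]
    rw [if_neg (by omega : ¬(n + 1 = 0)), (by omega : n + 1 - 1 = n), hn, if_pos hr]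
  -- the discrete running maxima
  set G : ℕ → Ω → ℝ :=
    fun n ω => (Finset.range (n+1)).sup' Finset.nonempty_range_add_one fun i => X (e i) ω with hG
  have hGmeas : ∀ n, Measurable (G n) := fun n =>
    Finset.measurable_range_sup'' fun i _ => (hX.stronglyMeasurable (e i)).measurable.le (ℱ.le _)
  have hGmono : ∀ ω, Monotone fun n => G n ω := by
    intro ω i j hij
    exact Finset.sup'_mono _ (Finset.range_subset_range.mpr (by omega)) _
  have hGT : ∀ n ω, X T ω ≤ G n ω := by
    intro n ω
    have h0 : (0 : ℕ) ∈ Finset.range (n+1) := Finset.mem_range.mpr (Nat.succ_pos n)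
    have h1 := Finset.le_sup' (fun i => X (e i) ω) h0
    simp only [he0] at h1
    exact h1
  -- maximal inequality for each level
  set A : ℝ → Set Ω := fun t => ⋃ n, {ω | t ≤ G n ω} with hA
  have hAmeas : ∀ t, MeasurableSet (A t) := fun t =>
    MeasurableSet.iUnion fun n => measurableSet_le measurable_const (hGmeas n)
  have hAkey : ∀ t : ℝ, 0 < t →
      ENNReal.ofReal t * μ (A t) ≤ ∫⁻ ω in A t, ENNReal.ofReal (X T ω) ∂μ := by
    intro t ht
    have hdir : Directed (· ⊆ ·) (fun n => {ω | t ≤ G n ω}) :=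
      (Monotone.directed_le fun i j hij ω (h : t ≤ G i ω) => le_trans h (hGmono ω hij))
    rw [hA, hdir.measure_iUnion, ENNReal.mul_iSup]
    apply iSup_le
    intro n
    have hFm := aux_finset_maximal hX hnonneg ((Finset.range (n+1)).image e)
      (Finset.Nonempty.image ⟨0, Finset.mem_range.mpr (Nat.succ_pos n)⟩ e)
      (fun t ht => by
        obtain ⟨i, _, rfl⟩ := Finset.mem_image.mp ht
        exact (heIcc i).2)
      (Finset.mem_image.mpr ⟨0, Finset.mem_range.mpr (Nat.succ_pos n), he0⟩) ht
    have hsupeq : ∀ ω, ((Finset.range (n+1)).image e).sup'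
        (Finset.Nonempty.image ⟨0, Finset.mem_range.mpr (Nat.succ_pos n)⟩ e)
        (fun s => X s ω) = G n ω := by
      intro ω
      rw [hG, Finset.sup'_image]
      rfl
    have hseteq : {ω | t ≤ ((Finset.range (n+1)).image e).sup'
        (Finset.Nonempty.image ⟨0, Finset.mem_range.mpr (Nat.succ_pos n)⟩ e)
        (fun s => X s ω)} = {ω | t ≤ G n ω} := by
      ext ω; rw [Set.mem_setOf_eq, hsupeq ω]; rfl
    rw [hseteq] at hFm
    calc ENNReal.ofReal t * μ {ω | t ≤ G n ω}
        ≤ ENNReal.ofReal (∫ ω in {ω | t ≤ G n ω}, X T ω ∂μ) := hFm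
      _ = ∫⁻ ω in {ω | t ≤ G n ω}, ENNReal.ofReal (X T ω) ∂μ := by
          apply ofReal_integral_eq_lintegral_ofReal hXTint.integrableOn
          exact ae_of_all _ fun ω => hnonneg T ω
      _ ≤ ∫⁻ ω in A t, ENNReal.ofReal (X T ω) ∂μ :=
          lintegral_mono_set (Set.subset_iUnion (fun n => {ω | t ≤ G n ω}) n)
  -- truncated suprema
  set R : ℕ → Ω → ℝ := fun m ω => ⨆ n, min (max (G n ω) x₀) (x₀ + m) with hR
  have hbdd : ∀ m ω, BddAbove (Set.range fun n => min (max (G n ω) x₀) (x₀ + (m:ℝ))) := by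
    intro m ω
    exact ⟨x₀ + m, by rintro y ⟨n, rfl⟩; exact min_le_right _ _⟩
  have hRlb : ∀ m ω, x₀ ≤ R m ω := by
    intro m ω
    refine le_trans ?_ (le_ciSup (hbdd m ω) 0)
    exact le_min (le_max_right _ _) (le_add_of_nonneg_right (Nat.cast_nonneg m))
  have hRub : ∀ m ω, R m ω ≤ x₀ + m := fun m ω => ciSup_le fun n => min_le_right _ _
  have hclampmono : ∀ m ω, Monotone fun n => min (max (G n ω) x₀) (x₀ + (m:ℝ)) := by
    intro m ω i j hij
    exact min_le_min (max_le_max (hGmono ω hij) le_rfl) le_rfl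
  have hRmeas : ∀ m, Measurable (R m) := by
    intro m
    apply measurable_of_tendsto_metrizable
      (fun n => ((hGmeas n).max measurable_const).min measurable_const)
    rw [tendsto_pi_nhds]
    intro ω
    exact tendsto_atTop_ciSup (hclampmono m ω) (hbdd m ω)
  have hRmono : ∀ ω, Monotone fun m => R m ω := by
    intro ω i j hij
    refine ciSup_le fun n => le_trans ?_ (le_ciSup (hbdd j ω) n)
    exact min_le_min le_rfl (by simp; exact_mod_cast hij)
  -- the per-truncation estimate
  have hKey : ∀ m : ℕ, (∫ ω, R m ω ∂μ) ≤ x₀ + (∫ ω, X T ω * Real.log (X T ω) ∂μ)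
      + (∫ ω, R m ω ∂μ) / β + (∫ ω, X T ω ∂μ) * (Real.log β - 1 - Real.log x₀) := by
    intro m
    set K : ℝ := x₀ + m with hKdef
    have hK : x₀ ≤ K := le_add_of_nonneg_right (Nat.cast_nonneg m)
    have hK0 : 0 < K := lt_of_lt_of_le hx₀ hK
    -- the product-measurable kernel
    set U : Set (ℝ × Ω) := ⋃ n, {p : ℝ × Ω | p.1 ≤ G n p.2} with hU
    have hUmeas : MeasurableSet U := MeasurableSet.iUnion fun n =>
      measurableSet_le measurable_fst ((hGmeas n).comp measurable_snd)
    set F2 : ℝ → Ω → ℝ≥0∞ := fun t ω =>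
      Set.indicator U (fun p => ENNReal.ofReal (X T p.2)) (t, ω) with hF2
    have hF2meas : Measurable (Function.uncurry F2) := by
      apply Measurable.indicator _ hUmeas
      exact (hXTmeas.comp measurable_snd).ennreal_ofReal
    -- distribution bound
    have hdist : ∀ t ∈ Set.Ico x₀ K, μ {ω | t < R m ω}
        ≤ ENNReal.ofReal (1/t) * ∫⁻ ω, F2 t ω ∂μ := by
      intro t ht
      have ht0 : 0 < t := lt_of_lt_of_le hx₀ ht.1
      have hsub2 : {ω | t < R m ω} ⊆ A t := by
        intro ω (h : t < R m ω)
        obtain ⟨n, hn⟩ := (lt_ciSup_iff (hbdd m ω)).mp h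
        have h1 : t < max (G n ω) x₀ := lt_of_lt_of_le hn (min_le_left _ _)
        rcases lt_max_iff.mp h1 with h2 | h2
        · exact Set.mem_iUnion.mpr ⟨n, h2.le⟩
        · exact absurd h2 (not_lt.mpr ht.1)
      have hF2eq : (∫⁻ ω, F2 t ω ∂μ) = ∫⁻ ω in A t, ENNReal.ofReal (X T ω) ∂μ := by
        rw [← lintegral_indicator (hAmeas t)]
        apply lintegral_congr
        intro ω
        show U.indicator (fun p => ENNReal.ofReal (X T p.2)) (t, ω)
          = (A t).indicator (fun ω => ENNReal.ofReal (X T ω)) ω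
        by_cases hω : ω ∈ A t
        · obtain ⟨n, hn⟩ := Set.mem_iUnion.mp hω
          have hn' : t ≤ G n ω := hn
          have hmem : (t, ω) ∈ U := Set.mem_iUnion.mpr ⟨n, hn'⟩
          rw [Set.indicator_of_mem hmem, Set.indicator_of_mem hω]
        · have hmem : (t, ω) ∉ U := by
            intro hc
            obtain ⟨n, hn⟩ := Set.mem_iUnion.mp hc
            have hn' : t ≤ G n ω := hn
            exact hω (Set.mem_iUnion.mpr ⟨n, hn'⟩)
          rw [Set.indicator_of_notMem hmem, Set.indicator_of_notMem hω]
      have h1t : ENNReal.ofReal (1/t) * ENNReal.ofReal t = 1 := by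
        rw [← ENNReal.ofReal_mul (by positivity)]
        rw [one_div, inv_mul_cancel₀ ht0.ne']
        exact ENNReal.ofReal_one
      calc μ {ω | t < R m ω} ≤ μ (A t) := measure_mono hsub2
        _ = ENNReal.ofReal (1/t) * (ENNReal.ofReal t * μ (A t)) := by
            rw [← mul_assoc, h1t, one_mul]
        _ ≤ ENNReal.ofReal (1/t) * ∫⁻ ω in A t, ENNReal.ofReal (X T ω) ∂μ :=
            mul_le_mul_right (hAkey t ht0) _
        _ = ENNReal.ofReal (1/t) * ∫⁻ ω, F2 t ω ∂μ := by rw [hF2eq]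
    -- layer cake and Fubini
    have hRnnae : 0 ≤ᵐ[μ] R m := ae_of_all _ fun ω => le_trans hx₀.le (hRlb m ω)
    have hlayer : ∫⁻ ω, ENNReal.ofReal (R m ω) ∂μ = ∫⁻ t in Set.Ioi 0, μ {ω | t < R m ω} :=
      lintegral_eq_lintegral_meas_lt μ hRnnae (hRmeas m).aemeasurable
    set ψ : ℝ → ℝ≥0∞ := fun t =>
      (Set.Ioo 0 x₀).indicator (fun _ => 1) t
        + (Set.Ico x₀ K).indicator (fun t => ENNReal.ofReal (1/t) * ∫⁻ ω, F2 t ω ∂μ) t with hψ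
    have hψt : ∀ t, ψ t = (Set.Ioo 0 x₀).indicator (fun _ => (1:ℝ≥0∞)) t
        + (Set.Ico x₀ K).indicator (fun t => ENNReal.ofReal (1/t) * ∫⁻ ω, F2 t ω ∂μ) t :=
      fun t => by rw [hψ]
    have htbound : (∫⁻ t in Set.Ioi 0, μ {ω | t < R m ω}) ≤ ∫⁻ t in Set.Ioi 0, ψ t := by
      apply lintegral_mono_ae
      filter_upwards [ae_restrict_mem measurableSet_Ioi] with t ht
      by_cases h1 : t < x₀
      · rw [hψt t, Set.indicator_of_mem (show t ∈ Set.Ioo 0 x₀ from ⟨ht, h1⟩)]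
        exact le_trans prob_le_one le_self_add
      · push_neg at h1
        by_cases h2 : t < K
        · rw [hψt t, Set.indicator_of_mem (show t ∈ Set.Ico x₀ K from ⟨h1, h2⟩)]
          exact le_trans (hdist t ⟨h1, h2⟩) le_add_self
        · push_neg at h2
          have hempty : {ω | t < R m ω} = ∅ := by
            ext ω
            simp only [Set.mem_setOf_eq, Set.mem_empty_iff_false, iff_false, not_lt]
            exact le_trans (hRub m ω) h2
          rw [hempty, measure_empty]
          exact zero_le
    have hψint : (∫⁻ t in Set.Ioi 0, ψ t)
        = ENNReal.ofReal x₀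
          + ∫⁻ t in Set.Ico x₀ K, ENNReal.ofReal (1/t) * ∫⁻ ω, F2 t ω ∂μ := by
      have hs1 : Set.Ioo 0 x₀ ∩ Set.Ioi 0 = Set.Ioo 0 x₀ :=
        Set.inter_eq_left.mpr fun x hx => Set.mem_Ioi.mpr hx.1
      have hs2 : Set.Ico x₀ K ∩ Set.Ioi 0 = Set.Ico x₀ K :=
        Set.inter_eq_left.mpr fun x hx => Set.mem_Ioi.mpr (lt_of_lt_of_le hx₀ hx.1)
      simp only [hψ]
      rw [lintegral_add_left (measurable_const.indicator measurableSet_Ioo)]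
      congr 1
      · rw [lintegral_indicator measurableSet_Ioo, Measure.restrict_restrict measurableSet_Ioo,
          hs1, setLIntegral_one, Real.volume_Ioo]
        norm_num
      · rw [lintegral_indicator measurableSet_Ico, Measure.restrict_restrict measurableSet_Ico,
          hs2]
    have hswap : (∫⁻ t in Set.Ico x₀ K, ENNReal.ofReal (1/t) * ∫⁻ ω, F2 t ω ∂μ)
        = ∫⁻ ω, (∫⁻ t in Set.Ico x₀ K, ENNReal.ofReal (1/t) * F2 t ω) ∂μ := by
      have h1 : ∀ t : ℝ, ENNReal.ofReal (1/t) * ∫⁻ ω, F2 t ω ∂μ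
          = ∫⁻ ω, ENNReal.ofReal (1/t) * F2 t ω ∂μ := fun t =>
        (lintegral_const_mul' _ _ ENNReal.ofReal_ne_top).symm
      simp_rw [h1]
      apply lintegral_lintegral_swap
      exact ((measurable_const.div measurable_fst).ennreal_ofReal.mul hF2meas).aemeasurable
    have hinner : ∀ ω, (∫⁻ t in Set.Ico x₀ K, ENNReal.ofReal (1/t) * F2 t ω)
        = ENNReal.ofReal (X T ω * (Real.log (R m ω) - Real.log x₀)) := by
      intro ω
      set sω : Set ℝ := ⋃ n, Set.Iic (G n ω) with hsω
      have hsmeas : MeasurableSet sω := MeasurableSet.iUnion fun n => measurableSet_Iic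
      have hptw : ∀ t, ENNReal.ofReal (1/t) * F2 t ω
          = sω.indicator (fun t => ENNReal.ofReal (1/t)) t * ENNReal.ofReal (X T ω) := by
        intro t
        by_cases htm : t ∈ sω
        · obtain ⟨n, hn⟩ := Set.mem_iUnion.mp htm
          have hn' : t ≤ G n ω := hn
          have hmem : (t, ω) ∈ U := Set.mem_iUnion.mpr ⟨n, hn'⟩
          have hF2v : F2 t ω = ENNReal.ofReal (X T ω) := Set.indicator_of_mem hmem _
          rw [hF2v, Set.indicator_of_mem htm]
        · have hmem : (t, ω) ∉ U := by
            intro hc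
            obtain ⟨n, hn⟩ := Set.mem_iUnion.mp hc
            have hn' : t ≤ G n ω := hn
            exact htm (Set.mem_iUnion.mpr ⟨n, hn'⟩)
          have hF2v : F2 t ω = 0 := Set.indicator_of_notMem hmem _
          rw [hF2v, Set.indicator_of_notMem htm, mul_zero, zero_mul]
      simp_rw [hptw]
      rw [lintegral_mul_const' _ _ ENNReal.ofReal_ne_top, lintegral_indicator hsmeas,
        Measure.restrict_restrict hsmeas]
      have hincl1 : Set.Ico x₀ (R m ω) ⊆ sω ∩ Set.Ico x₀ K := by
        intro t ht
        obtain ⟨n, hn⟩ := (lt_ciSup_iff (hbdd m ω)).mp ht.2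
        have h2 : t < max (G n ω) x₀ := lt_of_lt_of_le hn (min_le_left _ _)
        have h3 : t < G n ω := by
          rcases lt_max_iff.mp h2 with h | h
          · exact h
          · exact absurd h (not_lt.mpr ht.1)
        have h4 : t < K := lt_of_lt_of_le hn (min_le_right _ _)
        exact ⟨Set.mem_iUnion.mpr ⟨n, (h3.le : t ∈ Set.Iic (G n ω))⟩, ⟨ht.1, h4⟩⟩
      have hincl2 : sω ∩ Set.Ico x₀ K ⊆ Set.Icc x₀ (R m ω) := by
        rintro t ⟨hts, ht⟩
        obtain ⟨n, hn⟩ := Set.mem_iUnion.mp hts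
        have hn' : t ≤ G n ω := hn
        refine ⟨ht.1, le_trans ?_ (le_ciSup (hbdd m ω) n)⟩
        exact le_min (le_trans hn' (le_max_left _ _)) ht.2.le
      rw [aux_lintegral_inv hx₀ (hRlb m ω) hincl1 hincl2]
      rw [← ENNReal.ofReal_mul (sub_nonneg.mpr (Real.log_le_log hx₀ (hRlb m ω))), mul_comm]
    -- back to real integrals
    set W : Ω → ℝ := fun ω => X T ω * (Real.log (R m ω) - Real.log x₀) with hW
    have hWnn : ∀ ω, 0 ≤ W ω := fun ω =>
      mul_nonneg (hnonneg T ω) (sub_nonneg.mpr (Real.log_le_log hx₀ (hRlb m ω)))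
    have hWmeas : Measurable W :=
      hXTmeas.mul ((Real.measurable_log.comp (hRmeas m)).sub measurable_const)
    have hlogK : 0 ≤ Real.log K - Real.log x₀ := sub_nonneg.mpr (Real.log_le_log hx₀ hK)
    have hWint : Integrable W μ := by
      apply Integrable.mono (hXTint.mul_const (Real.log K - Real.log x₀))
        hWmeas.aestronglyMeasurable
      apply ae_of_all
      intro ω
      rw [Real.norm_eq_abs, Real.norm_eq_abs, abs_of_nonneg (hWnn ω),
        abs_of_nonneg (mul_nonneg (hnonneg T ω) hlogK)]
      exact mul_le_mul_of_nonneg_left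
        (sub_le_sub_right (Real.log_le_log (lt_of_lt_of_le hx₀ (hRlb m ω)) (hRub m ω)) _)
        (hnonneg T ω)
    have hRint : Integrable (R m) μ := by
      apply Integrable.mono (integrable_const K) (hRmeas m).aestronglyMeasurable
      apply ae_of_all
      intro ω
      rw [Real.norm_eq_abs, Real.norm_eq_abs,
        abs_of_nonneg (le_trans hx₀.le (hRlb m ω)), abs_of_nonneg hK0.le]
      exact hRub m ω
    have hcomb : ENNReal.ofReal (∫ ω, R m ω ∂μ) ≤ ENNReal.ofReal (x₀ + ∫ ω, W ω ∂μ) := by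
      calc ENNReal.ofReal (∫ ω, R m ω ∂μ) = ∫⁻ ω, ENNReal.ofReal (R m ω) ∂μ :=
            ofReal_integral_eq_lintegral_ofReal hRint hRnnae
        _ = ∫⁻ t in Set.Ioi 0, μ {ω | t < R m ω} := hlayer
        _ ≤ ∫⁻ t in Set.Ioi 0, ψ t := htbound
        _ = ENNReal.ofReal x₀
            + ∫⁻ t in Set.Ico x₀ K, ENNReal.ofReal (1/t) * ∫⁻ ω, F2 t ω ∂μ := hψint
        _ = ENNReal.ofReal x₀ + ∫⁻ ω, ENNReal.ofReal (W ω) ∂μ := by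
            rw [hswap]
            congr 1
            apply lintegral_congr
            intro ω
            exact hinner ω
        _ = ENNReal.ofReal x₀ + ENNReal.ofReal (∫ ω, W ω ∂μ) := by
            rw [← ofReal_integral_eq_lintegral_ofReal hWint (ae_of_all _ hWnn)]
        _ = ENNReal.ofReal (x₀ + ∫ ω, W ω ∂μ) := by
            rw [← ENNReal.ofReal_add hx₀.le (integral_nonneg hWnn)]
    have hreal : (∫ ω, R m ω ∂μ) ≤ x₀ + ∫ ω, W ω ∂μ :=
      (ENNReal.ofReal_le_ofReal_iff (add_nonneg hx₀.le (integral_nonneg hWnn))).mp hcomb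
    -- Young's inequality pointwise
    set H : Ω → ℝ := fun ω => X T ω * Real.log (X T ω) + R m ω / β
      + X T ω * (Real.log β - 1 - Real.log x₀) with hH
    have hHint : Integrable H μ := (hint.add (hRint.div_const β)).add (hXTint.mul_const _)
    have hWH : (∫ ω, W ω ∂μ) ≤ ∫ ω, H ω ∂μ := by
      apply integral_mono hWint hHint
      intro ω
      have hy := aux_young (hnonneg T ω) (lt_of_lt_of_le hx₀ (hRlb m ω)) hβ0
      show X T ω * (Real.log (R m ω) - Real.log x₀) ≤ X T ω * Real.log (X T ω) + R m ω / β
        + X T ω * (Real.log β - 1 - Real.log x₀)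
      nlinarith [hy]
    have hHval : (∫ ω, H ω ∂μ) = (∫ ω, X T ω * Real.log (X T ω) ∂μ)
        + (∫ ω, R m ω ∂μ) / β + (∫ ω, X T ω ∂μ) * (Real.log β - 1 - Real.log x₀) := by
      have hint2 : Integrable (fun ω => X T ω * Real.log (X T ω) + R m ω / β) μ :=
        hint.add (hRint.div_const β)
      have hint3 : Integrable (fun ω => X T ω * (Real.log β - 1 - Real.log x₀)) μ :=
        hXTint.mul_const _
      simp only [hH]
      rw [integral_add hint2 hint3, integral_add hint (hRint.div_const β), integral_div,
        integral_mul_const]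
    linarith [hreal, hWH, hHval.le, hHval.ge]
  -- rearrange per-truncation bound
  set C : ℝ := x₀ + (∫ ω, X T ω * Real.log (X T ω) ∂μ)
    + (∫ ω, X T ω ∂μ) * (Real.log β - 1 - Real.log x₀) with hC
  have hβ1 : 0 < β - 1 := by linarith
  have hB : ∀ m : ℕ, (∫ ω, R m ω ∂μ) ≤ C * (β / (β - 1)) := by
    intro m
    have h1 := hKey m
    set ρ : ℝ := ∫ ω, R m ω ∂μ with hρ
    have h2 : ρ ≤ C + ρ / β := by rw [hC]; linarith
    have h3 : ρ / β * β = ρ := div_mul_cancel₀ _ hβ0.ne'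
    have h4 : ρ * (β - 1) ≤ C * β := by nlinarith [mul_le_mul_of_nonneg_right h2 hβ0.le]
    rw [mul_div_assoc']
    exact (le_div_iff₀ hβ1).mpr h4
  -- integrability and nonnegativity of R m, outside hKey
  have hRnnae : ∀ m, 0 ≤ᵐ[μ] R m := fun m => ae_of_all _ fun ω => le_trans hx₀.le (hRlb m ω)
  have hRint : ∀ m, Integrable (R m) μ := by
    intro m
    apply Integrable.mono (integrable_const (x₀ + (m:ℝ))) (hRmeas m).aestronglyMeasurable
    apply ae_of_all
    intro ω
    rw [Real.norm_eq_abs, Real.norm_eq_abs,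
      abs_of_nonneg (le_trans hx₀.le (hRlb m ω)),
      abs_of_nonneg (le_trans hx₀.le (le_add_of_nonneg_right (Nat.cast_nonneg m)))]
    exact hRub m ω
  -- pointwise: the running maximum is dominated by the sup of truncations
  have hptsup : ∀ ω, ENNReal.ofReal (runMax (fun s => X s ω) T)
      ≤ ⨆ m : ℕ, ENNReal.ofReal (R m ω) := by
    intro ω
    set V : ℝ≥0∞ := ⨆ m : ℕ, ENNReal.ofReal (R m ω) with hV
    rcases eq_or_ne V ⊤ with htop | hne
    · rw [htop]; exact le_top
    · have hvle : ∀ m, R m ω ≤ V.toReal := by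
        intro m
        have h1 : ENNReal.ofReal (R m ω) ≤ V := le_iSup (fun m : ℕ => ENNReal.ofReal (R m ω)) m
        exact (ENNReal.ofReal_le_iff_le_toReal hne).mp h1
      have hGle : ∀ n, G n ω ≤ V.toReal := by
        intro n
        obtain ⟨m, hm⟩ := exists_nat_ge (G n ω - x₀)
        have h2 : G n ω ≤ min (max (G n ω) x₀) (x₀ + (m : ℝ)) :=
          le_min (le_max_left _ _) (by linarith)
        exact le_trans (le_trans h2 (le_ciSup (hbdd m ω) n)) (hvle m)
      have hv0 : 0 ≤ V.toReal := le_trans (le_trans hx₀.le (hRlb 0 ω)) (hvle 0)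
      have hXle : ∀ i, X (e i) ω ≤ V.toReal := by
        intro i
        refine le_trans ?_ (hGle i)
        have h5 := Finset.le_sup' (fun j => X (e j) ω)
          (Finset.mem_range.mpr (Nat.lt_succ_self i))
        exact h5
      have hrm : runMax (fun s => X s ω) T ≤ V.toReal := by
        apply aux_runMax_le (hcadlag ω).1 hT hv0
        · intro q hq
          obtain ⟨i, hi⟩ := heQ q ⟨hq.1.le, hq.2⟩
          calc X (q:ℝ) ω = X (e i) ω := by rw [hi]
            _ ≤ _ := hXle i
        · calc X T ω = X (e 0) ω := by rw [he0]
            _ ≤ _ := hXle 0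
      calc ENNReal.ofReal (runMax (fun s => X s ω) T)
          ≤ ENNReal.ofReal V.toReal := ENNReal.ofReal_le_ofReal hrm
        _ = V := ENNReal.ofReal_toReal hne
  calc (∫⁻ ω, ENNReal.ofReal (runMax (fun s => X s ω) T) ∂μ)
      ≤ ∫⁻ ω, ⨆ m : ℕ, ENNReal.ofReal (R m ω) ∂μ := lintegral_mono hptsup
    _ = ⨆ m : ℕ, ∫⁻ ω, ENNReal.ofReal (R m ω) ∂μ :=
        lintegral_iSup (fun m => (hRmeas m).ennreal_ofReal)
          (fun i j hij ω => ENNReal.ofReal_le_ofReal (hRmono ω hij))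
    _ ≤ ENNReal.ofReal (C * (β / (β - 1))) := by
        apply iSup_le
        intro m
        rw [← ofReal_integral_eq_lintegral_ofReal (hRint m) (hRnnae m)]
        exact ENNReal.ofReal_le_ofReal (hB m)


/-- **Improved Doob `L¹` inequality** (Corollary 3.5): for a nonnegative càdlàg
submartingale `X` with `X_0 = X₀ > 0` a.s. and `E[X_T log X_T] < ∞` (encoded as
integrability of `X_T log X_T`; its negative part is bounded), there is a unique
`α̂ ∈ (0,1]` with `α̂ (1 + E[(X_T/X₀) log(X_T/X₀)]) = E[X_T/X₀] (1 + α̂ log α̂)`, and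
`E[X̄_T] ≤ E[X_T]/α̂ = (E[X_T log X_T] + X₀ - E[X_T] log X₀)/(1 + α̂ log α̂)`. -/
theorem improved_doob_L1_inequality
    {Ω : Type} [m0 : MeasurableSpace Ω] (μ : Measure Ω) [IsProbabilityMeasure μ]
    (T : ℝ) (hT : 0 ≤ T) (x₀ : ℝ) (hx₀ : 0 < x₀)
    (ℱ : Filtration ℝ m0) (X : ℝ → Ω → ℝ)
    (hX : Submartingale X ℱ μ)
    (hcadlag : ∀ ω, IsCadlag fun s => X s ω)
    (hnonneg : ∀ s ω, 0 ≤ X s ω)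
    (hinit : ∀ᵐ ω ∂μ, X 0 ω = x₀)
    (hint : Integrable (fun ω => X T ω * Real.log (X T ω)) μ) :
    (∃! α : ℝ, α ∈ Set.Ioc (0 : ℝ) 1 ∧
        α * (1 + ∫ ω, (X T ω / x₀) * Real.log (X T ω / x₀) ∂μ)
          = (∫ ω, X T ω / x₀ ∂μ) * (1 + α * Real.log α)) ∧
    (∀ α : ℝ, α ∈ Set.Ioc (0 : ℝ) 1 →
      (α * (1 + ∫ ω, (X T ω / x₀) * Real.log (X T ω / x₀) ∂μ)
          = (∫ ω, X T ω / x₀ ∂μ) * (1 + α * Real.log α)) →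
      ((∫⁻ ω, ENNReal.ofReal (runMax (fun s => X s ω) T) ∂μ)
          ≤ ENNReal.ofReal ((∫ ω, X T ω ∂μ) / α) ∧
        (∫ ω, X T ω ∂μ) / α
          = ((∫ ω, X T ω * Real.log (X T ω) ∂μ) + x₀
              - (∫ ω, X T ω ∂μ) * Real.log x₀) / (1 + α * Real.log α))) := by
  classical
  have hXTint : Integrable (X T) μ := hX.integrable T
  set I : ℝ := ∫ ω, X T ω * Real.log (X T ω) ∂μ with hI
  set E : ℝ := ∫ ω, X T ω ∂μ with hE
  -- E ≥ x₀ > 0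
  have hEx₀ : x₀ ≤ E := by
    have h1 : ∫ ω, X 0 ω ∂μ = x₀ := by
      rw [integral_congr_ae hinit]
      simp [measure_univ]
    have h2 := hX.2.1 0 T hT
    have h3 : (∫ ω, X 0 ω ∂μ) ≤ ∫ ω, (μ[X T | ℱ 0]) ω ∂μ :=
      integral_mono_ae (hX.integrable 0) integrable_condExp h2
    rw [h1, integral_condExp (ℱ.le 0)] at h3
    exact h3
  have hE0 : 0 < E := lt_of_lt_of_le hx₀ hEx₀
  -- the normalized quantities
  have haval : (∫ ω, X T ω / x₀ ∂μ) = E / x₀ := by rw [integral_div, hE]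
  have hptb : ∀ ω, (X T ω / x₀) * Real.log (X T ω / x₀)
      = (X T ω * Real.log (X T ω) - X T ω * Real.log x₀) / x₀ := by
    intro ω
    rcases (hnonneg T ω).eq_or_lt with h0 | h0
    · rw [← h0]; simp
    · rw [Real.log_div h0.ne' hx₀.ne']
      field_simp
  have hbint : Integrable (fun ω => (X T ω / x₀) * Real.log (X T ω / x₀)) μ := by
    apply Integrable.congr (((hint.sub (hXTint.mul_const (Real.log x₀))).div_const x₀))
    exact ae_of_all _ fun ω => (hptb ω).symm
  have hbval : (∫ ω, (X T ω / x₀) * Real.log (X T ω / x₀) ∂μ)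
      = (I - E * Real.log x₀) / x₀ := by
    rw [integral_congr_ae (ae_of_all _ hptb), integral_div,
      integral_sub hint (hXTint.mul_const (Real.log x₀)), integral_mul_const, hI, hE]
  set b : ℝ := ∫ ω, (X T ω / x₀) * Real.log (X T ω / x₀) ∂μ with hb
  set a : ℝ := ∫ ω, X T ω / x₀ ∂μ with ha
  have ha1 : 1 ≤ a := by rw [haval]; exact (one_le_div hx₀).mpr hEx₀
  have hab : a ≤ 1 + b := by
    have h1 : ∀ ω, X T ω / x₀ - 1 ≤ (X T ω / x₀) * Real.log (X T ω / x₀) :=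
      fun ω => aux_mul_log_ge (div_nonneg (hnonneg T ω) hx₀.le)
    have h2 : (∫ ω, (X T ω / x₀ - 1) ∂μ) ≤ b :=
      integral_mono ((hXTint.div_const x₀).sub (integrable_const 1)) hbint h1
    have h3 : (∫ ω, (X T ω / x₀ - 1) ∂μ) = a - 1 := by
      rw [integral_sub (hXTint.div_const x₀) (integrable_const 1), haval]
      simp [measure_univ, hE, integral_div]
    linarith [h2, h3.symm.le, h3.le]
  refine ⟨aux_alpha_exists_unique ha1 hab, ?_⟩
  rintro α ⟨hα0, hα1⟩ heq
  have h1pos : 0 < 1 + α * Real.log α := aux_one_add_mul_log_pos hα0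
  -- the key scalar identity: α (x₀ + I - E log x₀) = E (1 + α log α)
  have h2 : α * (x₀ + I - E * Real.log x₀) = E * (1 + α * Real.log α) := by
    have heq' := heq
    rw [hbval, haval] at heq'
    field_simp at heq'
    linear_combination heq'
  constructor
  · -- the lintegral estimate
    rcases hα1.eq_or_lt with hONE | hlt
    · -- α = 1 : limiting argument
      subst hONE
      simp only [Real.log_one, mul_one, mul_zero, add_zero] at h2 ⊢
      rw [div_one]
      have hC : x₀ + I - E * Real.log x₀ = E := by linarith
      apply ENNReal.le_of_forall_pos_le_add
      intro ε hε _
      -- find β close to 1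
      have hslope : Tendsto (fun β : ℝ => Real.log β / (β - 1)) (𝓝[>] (1:ℝ)) (𝓝 1) := by
        have h3 := hasDerivAt_iff_tendsto_slope.mp (Real.hasDerivAt_log one_ne_zero)
        rw [show (1:ℝ)⁻¹ = 1 by norm_num] at h3
        have h4 : Tendsto (slope Real.log 1) (𝓝[>] (1:ℝ)) (𝓝 1) :=
          h3.mono_left (nhdsWithin_mono _ fun x hx => ne_of_gt hx)
        apply h4.congr'
        filter_upwards [self_mem_nhdsWithin] with β hβ
        rw [slope_def_field, Real.log_one, sub_zero]
      have hfull : Tendsto (fun β : ℝ => E * (Real.log β * (β / (β - 1)))) (𝓝[>] (1:ℝ))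
          (𝓝 E) := by
        have h5 : Tendsto (fun β : ℝ => Real.log β * (β / (β - 1))) (𝓝[>] (1:ℝ)) (𝓝 1) := by
          have h6 : Tendsto (fun β : ℝ => (Real.log β / (β - 1)) * β) (𝓝[>] (1:ℝ)) (𝓝 1) := by
            have h7 : Tendsto (fun β : ℝ => β) (𝓝[>] (1:ℝ)) (𝓝 1) :=
              tendsto_id.mono_left nhdsWithin_le_nhds
            simpa using hslope.mul h7
          apply h6.congr'
          filter_upwards [self_mem_nhdsWithin] with β hβ
          ring
        simpa using (tendsto_const_nhds (x := E)).mul h5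
      have hev : ∀ᶠ β in 𝓝[>] (1:ℝ), E * (Real.log β * (β / (β - 1))) < E + ε :=
        hfull.eventually_lt_const (lt_add_of_pos_right E (by exact_mod_cast hε))
      obtain ⟨β, hβlt, hβmem⟩ := (hev.and self_mem_nhdsWithin).exists
      have hβ1 : (1:ℝ) < β := hβmem
      calc (∫⁻ ω, ENNReal.ofReal (runMax (fun s => X s ω) T) ∂μ)
          ≤ ENNReal.ofReal ((x₀ + I + E * (Real.log β - 1 - Real.log x₀)) * (β / (β - 1))) :=
            aux_doob_core hT hx₀ hX hcadlag hnonneg hint hβ1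
        _ = ENNReal.ofReal (E * (Real.log β * (β / (β - 1)))) := by
            congr 1
            have : x₀ + I + E * (Real.log β - 1 - Real.log x₀) = E * Real.log β := by
              linarith [hC]
            rw [this, mul_assoc]
        _ ≤ ENNReal.ofReal (E + ε) := ENNReal.ofReal_le_ofReal hβlt.le
        _ ≤ ENNReal.ofReal E + ENNReal.ofReal (ε : ℝ) := ENNReal.ofReal_add_le
        _ = ENNReal.ofReal E + ε := by rw [ENNReal.ofReal_coe_nnreal]
    · -- α < 1 : exact choice β = 1/α
      have hβ1 : (1:ℝ) < 1/α := by rw [lt_div_iff₀ hα0]; linarith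
      refine le_trans (aux_doob_core hT hx₀ hX hcadlag hnonneg hint hβ1) (le_of_eq ?_)
      congr 1
      have hlog : Real.log (1/α) = -Real.log α := by rw [one_div, Real.log_inv]
      have h1α : (1:ℝ) - α ≠ 0 := sub_ne_zero.mpr (ne_of_gt hlt)
      have h6 : (0:ℝ) < 1/α - 1 := sub_pos.mpr hβ1
      have h5 : (1/α) / (1/α - 1) = 1 / (1 - α) := by
        rw [div_eq_div_iff h6.ne' h1α]
        field_simp
      rw [hlog, h5, mul_one_div, div_eq_div_iff h1α hα0.ne', ← hI, ← hE]
      linear_combination h2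
  · -- the identity
    rw [div_eq_div_iff hα0.ne' h1pos.ne']
    linear_combination -h2
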